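/- Let $U \subseteq \mathbb{R}^m$ be closed, $T > 0$, and let $\bar{u} : [0,T] \to U$ be measurable with $\bar u \in L^2(0,T;\mathbb{R}^m)$. Let $v \in L^2(0,T;\mathbb{R}^m)$ satisfy $v(t) \in T_U^\flat(\bar{u}(t))$ for a.e. $t \in [0,T]$. Then $v$ belongs to the adjacent cone $T_{\mathcal{U}_2}^\flat(\bar{u})$ of the set $\mathcal{U}_2 := \{u \in L^2(0,T;\mathbb{R}^m) : u(t) \in U \text{ a.e.}\}$ at $\bar{u}$ (with respect to the $L^2$ norm). -/

import Mathlib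

open Filter Metric Set MeasureTheory Topology Pointwise

/-- Kuratowski lower limit of a family of sets `K h` as `h → 0⁺`:
points whose distance to `K h` tends to `0`. -/
noncomputable def liminfSets {X : Type*} [PseudoMetricSpace X] (K : ℝ → Set X) : Set X :=
  {v | Filter.Tendsto (fun h => Metric.infDist v (K h)) (nhdsWithin 0 (Set.Ioi 0)) (nhds 0)}

/-- The adjacent cone `T_K^♭(x) = Liminf_{h→0⁺} (K - x)/h`. -/
noncomputable def adjCone {X : Type*} [NormedAddCommGroup X] [NormedSpace ℝ X]
    (K : Set X) (x : X) : Set X :=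
  liminfSets (fun h => (fun k => h⁻¹ • (k - x)) '' K)

/-- The second-order adjacent subset `T_K^{♭(2)}(x,v) = Liminf_{h→0⁺} (K - x - hv)/h²`. -/
noncomputable def adjCone2 {X : Type*} [NormedAddCommGroup X] [NormedSpace ℝ X]
    (K : Set X) (x v : X) : Set X :=
  liminfSets (fun h => (fun k => (h ^ 2)⁻¹ • (k - x - h • v)) '' K)

/-- dense sequence in a nonempty closed set -/
lemma aux_dense_seq {E : Type*} [MetricSpace E] [SecondCountableTopology E]
    (U : Set E) (hU : IsClosed U) (hne : U.Nonempty) :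
    ∃ e : ℕ → E, (∀ k, e k ∈ U) ∧ closure (Set.range e) = U := by
  have hsep : TopologicalSpace.IsSeparable U := TopologicalSpace.IsSeparable.of_separableSpace U
  obtain ⟨t, htU, htc, htd⟩ := hsep.exists_countable_dense_subset
  have htn : t.Nonempty := by
    rcases t.eq_empty_or_nonempty with h | h
    · rw [h] at htd; simpa [closure_empty] using (htd hne.choose_spec)
    · exact h
  obtain ⟨e, he⟩ := htc.exists_eq_range htn
  refine ⟨e, fun k => htU (he ▸ mem_range_self k), ?_⟩
  apply subset_antisymm
  · exact hU.closure_subset_iff.2 (he ▸ htU)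
  · exact he ▸ htd

lemma aux_nearest {E : Type*} [MeasurableSpace E] [PseudoMetricSpace E] [OpensMeasurableSpace E]
    (e : ℕ → E) (x : E) :
    Tendsto (fun N => dist (SimpleFunc.nearestPt e N x) x) atTop (𝓝 (infDist x (range e))) := by
  have hmem : ∀ N, SimpleFunc.nearestPt e N x ∈ range e := by
    intro N
    simp only [SimpleFunc.nearestPt, SimpleFunc.map_apply]
    exact mem_range_self _
  have hlb : ∀ N, infDist x (range e) ≤ dist (SimpleFunc.nearestPt e N x) x := fun N => by
    rw [dist_comm]; exact infDist_le_dist_of_mem (hmem N)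
  rw [Metric.tendsto_atTop]
  intro ε hε
  have hlt : infDist x (range e) < infDist x (range e) + ε := by linarith
  obtain ⟨y, ⟨k, rfl⟩, hy⟩ := (infDist_lt_iff (range_nonempty e)).1 hlt
  refine ⟨k, fun N hN => ?_⟩
  have hub : dist (SimpleFunc.nearestPt e N x) x ≤ dist (e k) x := by
    have := SimpleFunc.edist_nearestPt_le e x hN
    rw [edist_dist, edist_dist] at this
    exact (ENNReal.ofReal_le_ofReal_iff dist_nonneg).1 this
  rw [Real.dist_eq, abs_lt]
  constructor
  · have := hlb N; linarith
  · rw [dist_comm] at hy; linarith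

lemma aux_nearest_mem {E : Type*} [MeasurableSpace E] [PseudoMetricSpace E]
    [OpensMeasurableSpace E] (e : ℕ → E) (N : ℕ) (x : E) :
    SimpleFunc.nearestPt e N x ∈ range e := by
  simp only [SimpleFunc.nearestPt, SimpleFunc.map_apply]
  exact mem_range_self _

lemma aux_nearest_dist_le {E : Type*} [MeasurableSpace E] [PseudoMetricSpace E]
    [OpensMeasurableSpace E] (e : ℕ → E) (N : ℕ) (x : E) :
    dist (SimpleFunc.nearestPt e N x) x ≤ dist (e 0) x := by
  have := SimpleFunc.edist_nearestPt_le e x (Nat.zero_le N)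
  rw [edist_dist, edist_dist] at this
  exact (ENNReal.ofReal_le_ofReal_iff dist_nonneg).1 this

lemma aux_scale {E : Type*} [NormedAddCommGroup E] [NormedSpace ℝ E]
    (S : Set E) (x z : E) {h : ℝ} (hh : 0 < h) :
    infDist z ((fun k => h⁻¹ • (k - x)) '' S) = h⁻¹ * infDist (x + h • z) S := by
  have h0 : (h : ℝ) ≠ 0 := ne_of_gt hh
  have hi : (h⁻¹ : ℝ) ≠ 0 := inv_ne_zero h0
  have himg : (fun k => h⁻¹ • (k - x)) '' S = h⁻¹ • ((fun k => k - x) '' S) := by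
    rw [← Set.image_smul, Set.image_image]
  have hz : z = h⁻¹ • (h • z) := by rw [smul_smul, inv_mul_cancel₀ h0, one_smul]
  rw [himg]
  nth_rewrite 1 [hz]
  rw [infDist_smul₀ hi, norm_inv, Real.norm_eq_abs, abs_of_pos hh]
  congr 1
  have hiso : Isometry (fun y : E => y - x) :=
    Isometry.of_dist_eq (by intro a b; simp [dist_eq_norm])
  have := infDist_image (Φ := fun y : E => y - x) (x := x + h • z) (t := S) hiso
  simpa only [add_sub_cancel_left] using this

theorem stmt_8 (m : ℕ) (T : ℝ) (hT : 0 < T)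
    (U : Set (EuclideanSpace ℝ (Fin m))) (hU : IsClosed U)
    (μ : Measure ℝ) (hμ : μ = volume.restrict (Set.Icc 0 T))
    (ubar v : Lp (EuclideanSpace ℝ (Fin m)) 2 μ)
    (hubar : ∀ᵐ t ∂μ, ubar t ∈ U)
    (hv : ∀ᵐ t ∂μ, v t ∈ adjCone U (ubar t)) :
    v ∈ adjCone {u : Lp (EuclideanSpace ℝ (Fin m)) 2 μ | ∀ᵐ t ∂μ, u t ∈ U} ubar := by
  haveI : IsFiniteMeasure μ := by
    constructor
    rw [hμ, Measure.restrict_apply_univ, Real.volume_Icc]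
    exact ENNReal.ofReal_lt_top
  have hμne : μ ≠ 0 := by
    intro hcon
    have : μ Set.univ = 0 := by rw [hcon]; simp
    rw [hμ, Measure.restrict_apply_univ, Real.volume_Icc] at this
    simp only [ENNReal.ofReal_eq_zero] at this
    linarith
  haveI : NeBot (ae μ) := ae_neBot.2 hμne
  -- U is nonempty
  have hUne : U.Nonempty := by
    obtain ⟨t, ht⟩ := hubar.exists
    exact ⟨ubar t, ht⟩
  obtain ⟨e, heU, hecl⟩ := aux_dense_seq U hU hUne
  set ub : ℝ → EuclideanSpace ℝ (Fin m) := ⇑ubar with hub_def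
  set vv : ℝ → EuclideanSpace ℝ (Fin m) := ⇑v with hvv_def
  -- integrability of ‖vv‖²
  have hvv2int : Integrable (fun t => ‖vv t‖ ^ 2) μ := by
    refine (L2.integrable_inner (𝕜 := ℝ) v v).congr ?_
    filter_upwards with t
    rw [real_inner_self_eq_norm_sq]
  set J : ℝ → ℝ := fun h => ∫ t, (h⁻¹ * infDist (ub t + h • vv t) U) ^ 2 ∂μ with hJ_def
  -- Claim 2 : infDist bound
  have claim2 : ∀ h : ℝ, 0 < h →
      infDist v ((fun k => h⁻¹ • (k - ubar)) ''
        {u : Lp (EuclideanSpace ℝ (Fin m)) 2 μ | ∀ᵐ t ∂μ, u t ∈ U}) ≤ Real.sqrt (J h) := by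
    intro h hh
    have h0 : h ≠ 0 := ne_of_gt hh
    set X : Lp (EuclideanSpace ℝ (Fin m)) 2 μ := ubar + h • v with hX_def
    set x : ℝ → EuclideanSpace ℝ (Fin m) := fun t => ub t + h • vv t with hx_def
    have hX : ∀ᵐ t ∂μ, X t = x t := by
      filter_upwards [Lp.coeFn_add ubar (h • v), Lp.coeFn_smul h v] with t h1 h2
      rw [hX_def, h1, Pi.add_apply, h2, Pi.smul_apply]
    have hxmeas : AEStronglyMeasurable x μ :=
      (Lp.aestronglyMeasurable ubar).add ((Lp.aestronglyMeasurable v).const_smul h)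
    have hxmem : MemLp x 2 μ := (Lp.memLp X).ae_eq hX
    have hx2int : Integrable (fun t => ‖x t‖ ^ 2) μ := by
      refine (L2.integrable_inner (𝕜 := ℝ) X X).congr ?_
      filter_upwards [hX] with t ht
      rw [ht, real_inner_self_eq_norm_sq]
    set f : ℕ → ℝ → EuclideanSpace ℝ (Fin m) := fun N t => SimpleFunc.nearestPt e N (x t) with hf_def
    have hfmeas : ∀ N, AEStronglyMeasurable (f N) μ := fun N =>
      ((SimpleFunc.measurable (SimpleFunc.nearestPt e N)).comp_aemeasurable
        hxmeas.aemeasurable).aestronglyMeasurable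
    have hfU : ∀ N t, f N t ∈ U := by
      intro N t
      obtain ⟨k, hk⟩ := aux_nearest_mem e N (x t)
      rw [hf_def]; simp only; rw [← hk]; exact heU k
    have hfdist : ∀ N t, dist (f N t) (x t) ≤ dist (e 0) (x t) :=
      fun N t => aux_nearest_dist_le e N (x t)
    have hfmem : ∀ N, MemLp (f N) 2 μ := by
      intro N
      refine MemLp.of_le (g := fun t => ‖e 0‖ + 2 * ‖x t‖)
        (((memLp_const (‖e 0‖)).add (hxmem.norm.const_mul 2))) (hfmeas N) ?_
      filter_upwards with t
      have h1 : ‖f N t‖ ≤ dist (f N t) (x t) + ‖x t‖ := by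
        have := dist_triangle (f N t) (x t) 0
        simpa [dist_eq_norm] using this
      have h2 : dist (e 0) (x t) ≤ ‖e 0‖ + ‖x t‖ := by
        have := dist_triangle (e 0) 0 (x t)
        simpa [dist_eq_norm, dist_comm] using this
      have h3 : ‖f N t‖ ≤ ‖e 0‖ + 2 * ‖x t‖ := by
        have := hfdist N t; linarith
      refine h3.trans ?_
      rw [Real.norm_eq_abs]
      exact le_abs_self _
    set u : ℕ → Lp (EuclideanSpace ℝ (Fin m)) 2 μ := fun N => (hfmem N).toLp (f N) with hu_def
    have huU : ∀ N, u N ∈ {w : Lp (EuclideanSpace ℝ (Fin m)) 2 μ | ∀ᵐ t ∂μ, w t ∈ U} := by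
      intro N
      filter_upwards [(hfmem N).coeFn_toLp] with t ht
      rw [ht]; exact hfU N t
    have hnormsq : ∀ N, ‖X - u N‖ ^ 2 = ∫ t, ‖x t - f N t‖ ^ 2 ∂μ := by
      intro N
      rw [← real_inner_self_eq_norm_sq, L2.inner_def]
      refine integral_congr_ae ?_
      filter_upwards [Lp.coeFn_sub X (u N), (hfmem N).coeFn_toLp, hX] with t h1 h2 h3
      rw [h1, Pi.sub_apply, h2, h3, real_inner_self_eq_norm_sq]
    -- infDist bound for each N
    have hbound : ∀ N, infDist v ((fun k => h⁻¹ • (k - ubar)) ''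
        {w : Lp (EuclideanSpace ℝ (Fin m)) 2 μ | ∀ᵐ t ∂μ, w t ∈ U}) ≤ h⁻¹ * Real.sqrt (∫ t, ‖x t - f N t‖ ^ 2 ∂μ) := by
      intro N
      have hmem' : h⁻¹ • (u N - ubar) ∈ (fun k => h⁻¹ • (k - ubar)) ''
          {w : Lp (EuclideanSpace ℝ (Fin m)) 2 μ | ∀ᵐ t ∂μ, w t ∈ U} := ⟨u N, huU N, rfl⟩
      refine (infDist_le_dist_of_mem hmem').trans ?_
      rw [dist_eq_norm]
      have halg : v - h⁻¹ • (u N - ubar) = h⁻¹ • (X - u N) := by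
        rw [hX_def, smul_sub, smul_sub, smul_add, smul_smul, inv_mul_cancel₀ h0, one_smul]
        abel
      rw [halg, norm_smul, Real.norm_eq_abs, abs_inv, abs_of_pos hh]
      gcongr
      rw [← hnormsq N]
      rw [Real.sqrt_sq (norm_nonneg _)]
    -- N → ∞ limit
    have hDCT : Tendsto (fun N => ∫ t, ‖x t - f N t‖ ^ 2 ∂μ) atTop
        (𝓝 (∫ t, infDist (x t) U ^ 2 ∂μ)) := by
      refine tendsto_integral_of_dominated_convergence
        (bound := fun t => 2 * ‖e 0‖ ^ 2 + 2 * ‖x t‖ ^ 2) ?_ ?_ ?_ ?_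
      · intro N
        have : (fun t => ‖x t - f N t‖ ^ 2) =
            fun t => ‖x t - f N t‖ * ‖x t - f N t‖ := by ext t; ring
        rw [this]
        exact ((hxmeas.sub (hfmeas N)).norm).mul ((hxmeas.sub (hfmeas N)).norm)
      · exact (integrable_const (2 * ‖e 0‖ ^ 2)).add (hx2int.const_mul 2)
      · intro N
        filter_upwards with t
        have hd : dist (x t) (f N t) ≤ ‖e 0‖ + ‖x t‖ := by
          rw [dist_comm]
          refine (hfdist N t).trans ?_
          have := dist_triangle (e 0) 0 (x t)
          simpa [dist_eq_norm, dist_comm] using this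
        have hd0 : (0:ℝ) ≤ dist (x t) (f N t) := dist_nonneg
        rw [Real.norm_eq_abs, abs_of_nonneg (by positivity), ← dist_eq_norm]
        nlinarith [sq_nonneg (‖e 0‖ - ‖x t‖), norm_nonneg (e 0), norm_nonneg (x t)]
      · filter_upwards with t
        have h1 : Tendsto (fun N => dist (f N t) (x t)) atTop
            (𝓝 (infDist (x t) U)) := by
          have := aux_nearest e (x t)
          rwa [← infDist_closure, hecl] at this
        have h2 := h1.pow 2
        refine h2.congr ?_
        intro N
        rw [← dist_eq_norm, dist_comm]
    -- conclude
    have hlimit : Tendsto (fun N => h⁻¹ * Real.sqrt (∫ t, ‖x t - f N t‖ ^ 2 ∂μ)) atTop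
        (𝓝 (h⁻¹ * Real.sqrt (∫ t, infDist (x t) U ^ 2 ∂μ))) :=
      (((Real.continuous_sqrt.tendsto _).comp hDCT).const_mul _)
    have hfinal := ge_of_tendsto' hlimit hbound
    refine hfinal.trans (le_of_eq ?_)
    rw [hJ_def]
    simp only
    have : ∀ t : ℝ, (h⁻¹ * infDist (ub t + h • vv t) U) ^ 2
        = h⁻¹ ^ 2 * infDist (x t) U ^ 2 := by intro t; rw [hx_def]; ring
    simp_rw [this]
    rw [integral_const_mul, Real.sqrt_mul (sq_nonneg _), Real.sqrt_sq (by positivity)]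
  -- Claim 3 : sqrt (J h) → 0
  have claim3 : Tendsto (fun h => Real.sqrt (J h)) (𝓝[>] (0:ℝ)) (𝓝 0) := by
    have hJ0 : Tendsto J (𝓝[>] (0:ℝ)) (𝓝 0) := by
      rw [tendsto_iff_seq_tendsto]
      intro s hs
      have hspos : ∀ᶠ n in atTop, 0 < s n := hs self_mem_nhdsWithin
      have hs0 : Tendsto s atTop (𝓝 0) := hs.mono_right nhdsWithin_le_nhds
      have key : Tendsto (fun n => ∫ t, ((s n)⁻¹ * infDist (ub t + s n • vv t) U) ^ 2 ∂μ)
          atTop (𝓝 (∫ (_ : ℝ), (0:ℝ) ∂μ)) := by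
        refine tendsto_integral_filter_of_dominated_convergence
          (bound := fun t => ‖vv t‖ ^ 2) ?_ ?_ hvv2int ?_
        · filter_upwards with n
          have hcont : Continuous (fun y : EuclideanSpace ℝ (Fin m) => ((s n)⁻¹ * infDist y U) ^ 2) := by
            exact ((continuous_const.mul (continuous_infDist_pt U)).pow 2)
          exact hcont.comp_aestronglyMeasurable
            ((Lp.aestronglyMeasurable ubar).add ((Lp.aestronglyMeasurable v).const_smul (s n)))
        · filter_upwards [hspos] with n hn
          filter_upwards [hubar] with t ht
          have hd0 : infDist (ub t) U = 0 := infDist_zero_of_mem ht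
          have hdle : infDist (ub t + s n • vv t) U ≤ s n * ‖vv t‖ := by
            have := infDist_le_infDist_add_dist (x := ub t + s n • vv t) (y := ub t) (s := U)
            rw [hd0, zero_add, dist_eq_norm, add_sub_cancel_left, norm_smul,
              Real.norm_eq_abs, abs_of_pos hn] at this
            exact this
          have h1 : (0:ℝ) ≤ (s n)⁻¹ * infDist (ub t + s n • vv t) U := by
            have := infDist_nonneg (x := ub t + s n • vv t) (s := U)
            positivity
          have h2 : (s n)⁻¹ * infDist (ub t + s n • vv t) U ≤ ‖vv t‖ := by
            calc (s n)⁻¹ * infDist (ub t + s n • vv t) U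
                ≤ (s n)⁻¹ * (s n * ‖vv t‖) := by
                  exact mul_le_mul_of_nonneg_left hdle (by positivity)
              _ = ‖vv t‖ := by field_simp
          rw [Real.norm_eq_abs, abs_of_nonneg (sq_nonneg _)]
          exact pow_le_pow_left₀ h1 h2 2
        · filter_upwards [hubar, hv] with t ht htv
          have hg : Tendsto (fun h : ℝ =>
              infDist (vv t) ((fun k => h⁻¹ • (k - ub t)) '' U)) (𝓝[>] (0:ℝ)) (𝓝 0) := htv
          have hcomp := (hg.comp hs).pow 2
          rw [zero_pow (by norm_num)] at hcomp
          refine hcomp.congr' ?_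
          filter_upwards [hspos] with n hn
          simp only [Function.comp_apply]
          rw [aux_scale U (ub t) (vv t) hn]
      rw [integral_zero] at key
      exact key
    have := (Real.continuous_sqrt.tendsto 0).comp hJ0
    rw [Real.sqrt_zero] at this
    exact this
  -- assemble
  show Tendsto (fun h => infDist v ((fun k => h⁻¹ • (k - ubar)) ''
      {u : Lp (EuclideanSpace ℝ (Fin m)) 2 μ | ∀ᵐ t ∂μ, u t ∈ U})) (𝓝[>] (0:ℝ)) (𝓝 0)
  refine squeeze_zero' ?_ ?_ claim3
  · filter_upwards with h
    exact infDist_nonneg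
  · filter_upwards [self_mem_nhdsWithin] with h hh
    exact claim2 h hh
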